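/- In the linear SCM $Z^e = B^\star Z^e + \varepsilon + \delta^e$ (with $I - B^\star$ invertible, $\varepsilon \perp \delta^e$, $\mathbb{E}[\varepsilon\,{\delta^e}^\top]=0$, finite second moments), let $S^e = \mathrm{Cov}(\delta^e)$, $\mu^e = \mathbb{E}[\delta^e]$, $\mu^0=0$, weights $\omega^e>0$ summing to one, and for $\gamma\ge 0$ define the DRIG risk $\mathcal{L}_\gamma(b) = \mathbb{E}[(Y^0 - b^\top X^0)^2] + \gamma\sum_e \omega^e\big(\mathbb{E}[(Y^e - b^\top X^e)^2] - \mathbb{E}[(Y^0 - b^\top X^0)^2]\big)$. Consider test data $Z^v = B^\star Z^v + \varepsilon + v$ where $v$ is independent of $\varepsilon$ with $\mathbb{E}[\varepsilon v^\top]=0$. Then $\sup_{v : \mathbb{E}[vv^\top] \preceq U(\gamma)} \mathbb{E}[(Y^v - b^\top X^v)^2] = \mathcal{L}_\gamma(b)$ for every $b \in \mathbb{R}^p$, where $U(\gamma) = S^0 + \gamma\sum_e\omega^e(S^e - S^0 + \mu^e{\mu^e}^\top)$ and the supremum is over all random vectors $v$ with $\mathbb{E}[vv^\top] \preceq U(\gamma)$.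 -/

import Mathlib

open Matrix MeasureTheory Finset

private lemma dsum_eq_dot {n : ℕ} (w : Fin n → ℝ) (f : Fin n → Fin n → ℝ) :
    ∑ i, ∑ j, w i * w j * f i j = w ⬝ᵥ (Matrix.of f) *ᵥ w := by
  simp only [dotProduct, mulVec, Finset.mul_sum, Matrix.of_apply]
  exact Finset.sum_congr rfl fun i _ => Finset.sum_congr rfl fun j _ => by ring

private lemma my_sum_mulVec {n : ℕ} {ι : Type*} (s : Finset ι)
    (A : ι → Matrix (Fin n) (Fin n) ℝ) (v : Fin n → ℝ) :
    (∑ e ∈ s, A e) *ᵥ v = ∑ e ∈ s, A e *ᵥ v := by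
  funext i
  simp [mulVec, dotProduct, Matrix.sum_apply, Finset.sum_mul, Finset.sum_apply]
  rw [Finset.sum_comm]

private lemma my_dotProduct_sum {n : ℕ} {ι : Type*} (s : Finset ι)
    (v : Fin n → ℝ) (f : ι → Fin n → ℝ) :
    v ⬝ᵥ (∑ e ∈ s, f e) = ∑ e ∈ s, v ⬝ᵥ f e := by
  simp only [dotProduct, Finset.sum_apply, Finset.mul_sum]
  rw [Finset.sum_comm]

private lemma integral_sq_sum {Ω : Type*} [MeasurableSpace Ω] (P : Measure Ω)
    {n : ℕ} (w : Fin n → ℝ) (h : Ω → Fin n → ℝ)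
    (hint : ∀ i j, Integrable (fun ω => h ω i * h ω j) P) :
    ∫ ω, (∑ j, w j * h ω j) ^ 2 ∂P
      = ∑ i, ∑ j, w i * w j * ∫ ω, h ω i * h ω j ∂P := by
  have h1 : ∀ ω, (∑ j, w j * h ω j) ^ 2
      = ∑ i, ∑ j, w i * w j * (h ω i * h ω j) := by
    intro ω
    rw [sq, Finset.sum_mul_sum]
    exact Finset.sum_congr rfl fun i _ => Finset.sum_congr rfl fun j _ => by ring
  simp_rw [h1]
  rw [integral_finset_sum]
  · refine Finset.sum_congr rfl fun i _ => ?_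
    rw [integral_finset_sum]
    · exact Finset.sum_congr rfl fun j _ => integral_const_mul _ _
    · exact fun j _ => (hint i j).const_mul _
  · intro i _
    exact integrable_finset_sum _ fun j _ => (hint i j).const_mul _

private lemma cross_risk {Ω : Type*} [MeasurableSpace Ω] (P : Measure Ω) {n : ℕ}
    (w : Fin n → ℝ) (f g : Ω → Fin n → ℝ)
    (hf2 : ∀ i j, Integrable (fun ω => f ω i * f ω j) P)
    (hg2 : ∀ i j, Integrable (fun ω => g ω i * g ω j) P)
    (hfg : ∀ i j, Integrable (fun ω => f ω i * g ω j) P)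
    (hfg0 : ∀ i j, ∫ ω, f ω i * g ω j ∂P = 0) :
    ∫ ω, (∑ j, w j * (f ω j + g ω j)) ^ 2 ∂P
      = (∑ i, ∑ j, w i * w j * ∫ ω, f ω i * f ω j ∂P)
        + ∑ i, ∑ j, w i * w j * ∫ ω, g ω i * g ω j ∂P := by
  have hgf : ∀ i j, Integrable (fun ω => g ω i * f ω j) P := by
    intro i j
    have := hfg j i
    refine this.congr (Filter.Eventually.of_forall fun ω => by ring)
  have hgf0 : ∀ i j, ∫ ω, g ω i * f ω j ∂P = 0 := by
    intro i j
    rw [show (fun ω => g ω i * f ω j) = fun ω => f ω j * g ω i from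
      funext fun ω => mul_comm _ _]
    exact hfg0 j i
  have hI1 : ∀ i j, Integrable (fun ω => f ω i * f ω j + f ω i * g ω j) P :=
    fun i j => (hf2 i j).add (hfg i j)
  have hI2 : ∀ i j, Integrable (fun ω => g ω i * f ω j + g ω j * g ω j) P :=
    fun i j => (hgf i j).add (hg2 j j)
  have hI2' : ∀ i j, Integrable (fun ω => g ω i * f ω j + g ω i * g ω j) P :=
    fun i j => (hgf i j).add (hg2 i j)
  have hint : ∀ i j, Integrable (fun ω => (f ω i + g ω i) * (f ω j + g ω j)) P := by
    intro i j
    have := (hI1 i j).add (hI2' i j)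
    refine this.congr (Filter.Eventually.of_forall fun ω => ?_)
    simp only [Pi.add_apply]
    ring
  rw [integral_sq_sum P w (fun ω j => f ω j + g ω j) hint]
  have hterm : ∀ i j, ∫ ω, (f ω i + g ω i) * (f ω j + g ω j) ∂P
      = (∫ ω, f ω i * f ω j ∂P) + ∫ ω, g ω i * g ω j ∂P := by
    intro i j
    have expand : (fun ω => (f ω i + g ω i) * (f ω j + g ω j))
        = fun ω => f ω i * f ω j + f ω i * g ω j + (g ω i * f ω j + g ω i * g ω j) :=
      funext fun ω => by ring
    rw [expand, integral_add (hI1 i j) (hI2' i j),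
      integral_add (hf2 i j) (hfg i j), integral_add (hgf i j) (hg2 i j),
      hfg0 i j, hgf0 i j]
    ring
  simp_rw [hterm, mul_add]
  rw [← Finset.sum_add_distrib]
  exact Finset.sum_congr rfl fun i _ => by rw [Finset.sum_add_distrib]

private lemma quad_vecMulVec {n : ℕ} (x u : Fin n → ℝ) :
    x ⬝ᵥ (Matrix.of fun i j => u i * u j) *ᵥ x = (x ⬝ᵥ u) ^ 2 := by
  have h2 : (x ⬝ᵥ u) ^ 2 = ∑ i, ∑ j, (x i * u i) * (x j * u j) := by
    rw [sq, dotProduct, Finset.sum_mul_sum]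
  rw [h2]
  simp only [dotProduct, mulVec, Matrix.of_apply, Finset.mul_sum]
  exact Finset.sum_congr rfl fun i _ => Finset.sum_congr rfl fun j _ => by ring

private lemma herm_dot_comm {n : ℕ} {U : Matrix (Fin n) (Fin n) ℝ}
    (hU : U.IsHermitian) (x y : Fin n → ℝ) :
    y ⬝ᵥ U *ᵥ x = x ⬝ᵥ U *ᵥ y := by
  have hsymm : ∀ i j, U j i = U i j := fun i j => by
    conv_lhs => rw [← hU]
    simp [Matrix.conjTranspose_apply]
  simp only [dotProduct, mulVec, Finset.mul_sum]
  rw [Finset.sum_comm]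
  exact Finset.sum_congr rfl fun i _ => Finset.sum_congr rfl fun j _ => by
    rw [hsymm i j]; ring

private lemma psd_cauchy {n : ℕ} {U : Matrix (Fin n) (Fin n) ℝ} (hU : U.PosSemidef)
    (x y : Fin n → ℝ) (ht : 0 < y ⬝ᵥ U *ᵥ y) :
    (x ⬝ᵥ U *ᵥ y) ^ 2 ≤ (x ⬝ᵥ U *ᵥ x) * (y ⬝ᵥ U *ᵥ y) := by
  set a := x ⬝ᵥ U *ᵥ y with ha
  set t := y ⬝ᵥ U *ᵥ y with htd
  set s := x ⬝ᵥ U *ᵥ x with hs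
  have key := hU.dotProduct_mulVec_nonneg (x + (-(a / t)) • y)
  have hstar : star (x + (-(a / t)) • y) = x + (-(a / t)) • y := by
    simp [Pi.star_def]
  rw [hstar] at key
  simp only [add_dotProduct, smul_dotProduct, mulVec_add, mulVec_smul,
    dotProduct_add, dotProduct_smul, smul_eq_mul] at key
  rw [herm_dot_comm hU.1 x y] at key
  rw [← ha, ← htd, ← hs] at key
  have hc : a + -(a / t) * t = 0 := by field_simp; ring
  rw [hc] at key
  have h1 : a / t * a ≤ s := by linarith [key]
  have h2 : a ^ 2 = a / t * a * t := by field_simp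
  rw [h2]
  exact mul_le_mul_of_nonneg_right h1 ht.le
theorem drig_worst_case_risk {p : ℕ} {ι : Type*} [Fintype ι] (e₀ : ι)
    {Ω : Type*} [MeasurableSpace Ω] (P : Measure Ω) [IsProbabilityMeasure P]
    (B : Matrix (Fin (p + 1)) (Fin (p + 1)) ℝ) (hB : IsUnit (1 - B).det)
    (ε : Ω → Fin (p + 1) → ℝ) (δ : ι → Ω → Fin (p + 1) → ℝ)
    (hε1 : ∀ i, Integrable (fun ω => ε ω i) P)
    (hε2 : ∀ i j, Integrable (fun ω => ε ω i * ε ω j) P)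
    (hε0 : ∀ i, ∫ ω, ε ω i ∂P = 0)
    (hδ1 : ∀ e i, Integrable (fun ω => δ e ω i) P)
    (hδ2 : ∀ e i j, Integrable (fun ω => δ e ω i * δ e ω j) P)
    (hεδ : ∀ e i j, Integrable (fun ω => ε ω i * δ e ω j) P)
    (hεδ0 : ∀ e i j, ∫ ω, ε ω i * δ e ω j ∂P = 0)
    (Z : ι → Ω → Fin (p + 1) → ℝ)
    (hZ : ∀ e ω, Z e ω = B *ᵥ Z e ω + ε ω + δ e ω)
    (ωw : ι → ℝ) (hωpos : ∀ e, 0 < ωw e) (hωsum : ∑ e, ωw e = 1)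
    -- means and covariances of the training interventions
    (μv : ι → Fin (p + 1) → ℝ) (hμv : ∀ e i, μv e i = ∫ ω, δ e ω i ∂P)
    (hμ0 : ∀ i, μv e₀ i = 0)
    (S : ι → Matrix (Fin (p + 1)) (Fin (p + 1)) ℝ)
    (hS : ∀ e, S e = Matrix.of fun i j =>
        (∫ ω, δ e ω i * δ e ω j ∂P) - μv e i * μv e j)
    -- reference-environment dominance assumption
    (hdom : ((∑ e, ωw e • Matrix.of fun i j => ∫ ω, δ e ω i * δ e ω j ∂P)
        - Matrix.of fun i j => ∫ ω, δ e₀ ω i * δ e₀ ω j ∂P).PosSemidef)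
    (γ : ℝ) (hγ : 0 ≤ γ) (b : Fin p → ℝ)
    (U : Matrix (Fin (p + 1)) (Fin (p + 1)) ℝ)
    (hU : U = S e₀ + γ • ∑ e, ωw e • (S e - S e₀ + vecMulVec (μv e) (μv e)))
    (R : ι → Ω → ℝ)
    (hR : ∀ e ω, R e ω = Z e ω (Fin.last p) - ∑ i : Fin p, b i * Z e ω i.castSucc)
    (Lγ : ℝ)
    (hL : Lγ = (∫ ω, (R e₀ ω) ^ 2 ∂P)
        + γ * ∑ e, ωw e * ((∫ ω, (R e ω) ^ 2 ∂P) - ∫ ω, (R e₀ ω) ^ 2 ∂P)) :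
    IsLUB { r : ℝ | ∃ v : Ω → Fin (p + 1) → ℝ,
        (∀ i j, Integrable (fun ω => v ω i * v ω j) P) ∧
        (∀ i j, Integrable (fun ω => ε ω i * v ω j) P) ∧
        (∀ i j, ∫ ω, ε ω i * v ω j ∂P = 0) ∧
        (U - Matrix.of fun i j => ∫ ω, v ω i * v ω j ∂P).PosSemidef ∧
        r = ∫ ω, (((1 - B)⁻¹ *ᵥ (ε ω + v ω)) (Fin.last p)
            - ∑ i : Fin p, b i * ((1 - B)⁻¹ *ᵥ (ε ω + v ω)) i.castSucc) ^ 2 ∂P }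
      Lγ := by
  have hA1 : (1 - B)⁻¹ * (1 - B) = 1 := Matrix.nonsing_inv_mul (1 - B) hB
  set A := (1 - B)⁻¹ with hAdef
  set w : Fin (p + 1) → ℝ :=
    fun j => A (Fin.last p) j - ∑ i : Fin p, b i * A i.castSucc j with hw
  -- contraction
  have hcontract : ∀ u : Fin (p + 1) → ℝ,
      (A *ᵥ u) (Fin.last p) - ∑ i : Fin p, b i * (A *ᵥ u) i.castSucc
        = ∑ j, w j * u j := by
    intro u
    have hswap : ∑ j, (∑ i : Fin p, b i * A i.castSucc j) * u j
        = ∑ i : Fin p, b i * ∑ j, A i.castSucc j * u j := by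
      simp_rw [Finset.sum_mul]
      rw [Finset.sum_comm]
      simp_rw [Finset.mul_sum, mul_assoc]
    simp only [hw, mulVec, dotProduct, sub_mul, Finset.sum_sub_distrib]
    rw [hswap]
  -- matrices
  set Mm : ι → Matrix (Fin (p + 1)) (Fin (p + 1)) ℝ :=
    fun e => Matrix.of fun i j => ∫ ω, δ e ω i * δ e ω j ∂P with hMm
  set qE : ℝ := w ⬝ᵥ (Matrix.of fun i j => ∫ ω, ε ω i * ε ω j ∂P) *ᵥ w with hqE
  -- structural solve
  have hZsolve : ∀ e ω, Z e ω = A *ᵥ (ε ω + δ e ω) := by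
    intro e ω
    have h1 : (1 - B) *ᵥ Z e ω = ε ω + δ e ω := by
      rw [Matrix.sub_mulVec, Matrix.one_mulVec]
      nth_rewrite 1 [hZ e ω]
      abel
    calc Z e ω = 1 *ᵥ Z e ω := by rw [Matrix.one_mulVec]
      _ = (A * (1 - B)) *ᵥ Z e ω := by rw [hAdef, hA1]
      _ = A *ᵥ ((1 - B) *ᵥ Z e ω) := by rw [Matrix.mulVec_mulVec]
      _ = A *ᵥ (ε ω + δ e ω) := by rw [h1]
  -- risk of training environments
  have hRe : ∀ e, ∫ ω, (R e ω) ^ 2 ∂P = qE + w ⬝ᵥ Mm e *ᵥ w := by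
    intro e
    have hval : ∀ ω, R e ω = ∑ j, w j * (ε ω j + δ e ω j) := by
      intro ω
      rw [hR, hZsolve]
      simpa using hcontract (ε ω + δ e ω)
    simp_rw [hval]
    rw [cross_risk P w ε (δ e) hε2 (hδ2 e) (hεδ e) (hεδ0 e), dsum_eq_dot, dsum_eq_dot]
  -- U in terms of second-moment matrices
  have hS0 : S e₀ = Mm e₀ := by
    ext i j
    simp [hS, hMm, hμ0]
  have hSM : ∀ e, S e - S e₀ + vecMulVec (μv e) (μv e) = Mm e - Mm e₀ := by
    intro e
    ext i j
    simp [hS, hMm, hμ0, vecMulVec_apply, Matrix.sub_apply, Matrix.add_apply]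
    ring
  have hUM : U = Mm e₀ + γ • ∑ e, ωw e • (Mm e - Mm e₀) := by
    have hsum : ∑ e, ωw e • (S e - S e₀ + vecMulVec (μv e) (μv e))
        = ∑ e, ωw e • (Mm e - Mm e₀) :=
      Finset.sum_congr rfl fun e _ => by rw [hSM]
    rw [hU, hsum, hS0]
  have hqU : ∀ x : Fin (p + 1) → ℝ, x ⬝ᵥ U *ᵥ x
      = x ⬝ᵥ Mm e₀ *ᵥ x + γ * ∑ e, ωw e * (x ⬝ᵥ Mm e *ᵥ x - x ⬝ᵥ Mm e₀ *ᵥ x) := by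
    intro x
    rw [hUM, Matrix.add_mulVec, dotProduct_add]
    congr 1
    rw [Matrix.smul_mulVec, dotProduct_smul, smul_eq_mul]
    congr 1
    rw [my_sum_mulVec, my_dotProduct_sum]
    refine Finset.sum_congr rfl fun e _ => ?_
    rw [Matrix.smul_mulVec, dotProduct_smul, smul_eq_mul,
      Matrix.sub_mulVec, dotProduct_sub]
  have hLq : Lγ = qE + w ⬝ᵥ U *ᵥ w := by
    rw [hL]
    simp_rw [hRe]
    rw [hqU w]
    have hterm : ∀ e, ωw e * ((qE + w ⬝ᵥ Mm e *ᵥ w) - (qE + w ⬝ᵥ Mm e₀ *ᵥ w))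
        = ωw e * (w ⬝ᵥ Mm e *ᵥ w - w ⬝ᵥ Mm e₀ *ᵥ w) := fun e => by ring
    simp_rw [hterm]
    ring
  -- generic risk of a test perturbation
  have hriskgen : ∀ (v : Ω → Fin (p + 1) → ℝ),
      (∀ i j, Integrable (fun ω => v ω i * v ω j) P) →
      (∀ i j, Integrable (fun ω => ε ω i * v ω j) P) →
      (∀ i j, ∫ ω, ε ω i * v ω j ∂P = 0) →
      (∫ ω, ((A *ᵥ (ε ω + v ω)) (Fin.last p)
          - ∑ i : Fin p, b i * ((A *ᵥ (ε ω + v ω)) i.castSucc)) ^ 2 ∂P)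
        = qE + w ⬝ᵥ (Matrix.of fun i j => ∫ ω, v ω i * v ω j ∂P) *ᵥ w := by
    intro v hv1 hv2 hv3
    have hcv : ∀ ω, (A *ᵥ (ε ω + v ω)) (Fin.last p)
        - ∑ i : Fin p, b i * ((A *ᵥ (ε ω + v ω)) i.castSucc)
        = ∑ j, w j * (ε ω j + v ω j) := fun ω => by
      simpa using hcontract (ε ω + v ω)
    simp_rw [hcv]
    rw [cross_risk P w ε v hε2 hv1 hv2 hv3, dsum_eq_dot, dsum_eq_dot]
  -- star is trivial on real vectors
  have hstar : ∀ x : Fin (p + 1) → ℝ, star x = x := fun x => by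
    funext i; simp
  -- symmetry and PSD facts
  have hMsym : ∀ e i j, (∫ ω, δ e ω j * δ e ω i ∂P) = ∫ ω, δ e ω i * δ e ω j ∂P :=
    fun e i j => integral_congr_ae (Filter.Eventually.of_forall fun ω => mul_comm _ _)
  have hMherm : ∀ e, (Mm e).IsHermitian := by
    intro e
    ext i j
    simp only [Matrix.conjTranspose_apply, hMm, Matrix.of_apply, star_trivial]
    exact hMsym e i j
  have hMq : ∀ e (x : Fin (p + 1) → ℝ),
      x ⬝ᵥ Mm e *ᵥ x = ∫ ω, (∑ j, x j * δ e ω j) ^ 2 ∂P := by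
    intro e x
    rw [integral_sq_sum P x (δ e) (hδ2 e), dsum_eq_dot]
  have hM0nn : ∀ x : Fin (p + 1) → ℝ, 0 ≤ x ⬝ᵥ Mm e₀ *ᵥ x := by
    intro x
    rw [hMq]
    exact integral_nonneg fun ω => sq_nonneg _
  have hDpsd : (∑ e, ωw e • Mm e - Mm e₀).PosSemidef := hdom
  have hDq : ∀ x : Fin (p + 1) → ℝ,
      x ⬝ᵥ (∑ e, ωw e • Mm e - Mm e₀) *ᵥ x
        = ∑ e, ωw e * (x ⬝ᵥ Mm e *ᵥ x - x ⬝ᵥ Mm e₀ *ᵥ x) := by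
    intro x
    rw [Matrix.sub_mulVec, dotProduct_sub, my_sum_mulVec, my_dotProduct_sum]
    simp_rw [Matrix.smul_mulVec, dotProduct_smul, smul_eq_mul, mul_sub]
    rw [Finset.sum_sub_distrib, ← Finset.sum_mul, hωsum, one_mul]
  have hUherm : U.IsHermitian := by
    rw [hUM]
    ext i j
    simp only [Matrix.conjTranspose_apply, Matrix.add_apply, Matrix.smul_apply,
      Matrix.sum_apply, Matrix.sub_apply, smul_eq_mul, star_trivial, hMm, Matrix.of_apply]
    simp_rw [hMsym]
  have hUpsd : U.PosSemidef := by
    refine PosSemidef.of_dotProduct_mulVec_nonneg hUherm fun x => ?_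
    rw [hstar, hqU x]
    have hD := hDpsd.dotProduct_mulVec_nonneg x
    rw [hstar, hDq] at hD
    exact add_nonneg (hM0nn x) (mul_nonneg hγ hD)
  constructor
  · -- upper bound
    rintro r ⟨v, hv1, hv2, hv3, hpsd, hr⟩
    rw [hr, hriskgen v hv1 hv2 hv3, hLq]
    have hle := hpsd.dotProduct_mulVec_nonneg w
    rw [hstar, Matrix.sub_mulVec, dotProduct_sub] at hle
    linarith
  · -- least upper bound
    intro c hc
    have ht0 : 0 ≤ w ⬝ᵥ U *ᵥ w := by
      have := hUpsd.dotProduct_mulVec_nonneg w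
      rwa [hstar] at this
    refine hc ?_
    by_cases hts : w ⬝ᵥ U *ᵥ w = 0
    · -- v = 0 attains
      have hz : (Matrix.of fun i j =>
          ∫ ω, (fun (_ : Ω) (_ : Fin (p + 1)) => (0 : ℝ)) ω i
            * (fun (_ : Ω) (_ : Fin (p + 1)) => (0 : ℝ)) ω j ∂P)
          = (0 : Matrix (Fin (p + 1)) (Fin (p + 1)) ℝ) := by
        ext i j; simp
      refine ⟨fun _ _ => 0, ?_, ?_, ?_, ?_, ?_⟩
      · intro i j; simpa using (integrable_const (0 : ℝ) : Integrable (fun _ : Ω => (0:ℝ)) P)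
      · intro i j; simpa using (integrable_const (0 : ℝ) : Integrable (fun _ : Ω => (0:ℝ)) P)
      · intro i j; simp
      · rw [hz, sub_zero]; exact hUpsd
      · rw [hLq, hriskgen _ (fun i j => by
            simpa using (integrable_const (0 : ℝ) : Integrable (fun _ : Ω => (0:ℝ)) P))
          (fun i j => by
            simpa using (integrable_const (0 : ℝ) : Integrable (fun _ : Ω => (0:ℝ)) P))
          (fun i j => by simp), hz, hts]
        simp
    · -- positive worst-case energy
      have htpos : 0 < w ⬝ᵥ U *ᵥ w := lt_of_le_of_ne ht0 (Ne.symm hts)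
      set t : ℝ := w ⬝ᵥ U *ᵥ w with htdef
      set cvec : Fin (p + 1) → ℝ := fun j => (Real.sqrt t)⁻¹ * (U *ᵥ w) j with hcvec
      have hv1 : ∀ i j, Integrable (fun ω : Ω => cvec i * cvec j) P :=
        fun i j => integrable_const _
      have hv2 : ∀ i j, Integrable (fun ω => ε ω i * cvec j) P :=
        fun i j => (hε1 i).mul_const _
      have hv3 : ∀ i j, ∫ ω, ε ω i * cvec j ∂P = 0 := by
        intro i j
        rw [integral_mul_const, hε0, zero_mul]
      have hMv : (Matrix.of fun i j => ∫ ω, cvec i * cvec j ∂P)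
          = Matrix.of fun i j => cvec i * cvec j := by
        ext i j; simp
      have hinv : ((Real.sqrt t)⁻¹) ^ 2 = t⁻¹ := by
        rw [← Real.sqrt_inv, Real.sq_sqrt (inv_nonneg.mpr htpos.le)]
      have hxc : ∀ x : Fin (p + 1) → ℝ,
          (x ⬝ᵥ cvec) ^ 2 = (x ⬝ᵥ U *ᵥ w) ^ 2 / t := by
        intro x
        have h1 : x ⬝ᵥ cvec = (Real.sqrt t)⁻¹ * (x ⬝ᵥ (U *ᵥ w)) := by
          simp only [hcvec, dotProduct, Finset.mul_sum]
          exact Finset.sum_congr rfl fun j _ => by ring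
        rw [h1, mul_pow, hinv]
        ring
      refine ⟨fun _ => cvec, hv1, hv2, hv3, ?_, ?_⟩
      · rw [hMv]
        refine PosSemidef.of_dotProduct_mulVec_nonneg ?_ ?_
        · ext i j
          have hUsymm : U j i = U i j := by
            conv_lhs => rw [← hUherm]
            simp [Matrix.conjTranspose_apply]
          simp only [Matrix.conjTranspose_apply, Matrix.sub_apply, Matrix.of_apply,
            star_trivial]
          rw [hUsymm, mul_comm]
        · intro x
          rw [hstar, Matrix.sub_mulVec, dotProduct_sub, quad_vecMulVec, hxc]
          have hcs := psd_cauchy hUpsd x w htpos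
          have hdiv : (x ⬝ᵥ U *ᵥ w) ^ 2 / t ≤ x ⬝ᵥ U *ᵥ x := by
            rw [div_le_iff₀ htpos]
            exact hcs
          linarith
      · rw [hLq, hriskgen _ hv1 hv2 hv3, hMv]
        congr 1
        rw [quad_vecMulVec, hxc]
        rw [← htdef]
        field_simp
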